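/- The eigenvalue set for the adjoint tuple is hereditary: if μ = (μ_1,…,μ_n) ∈ ℂ^n is an eigenvalue for the adjoint tuple, then every λ = (λ_1,…,λ_n) ∈ ℂ^n with |λ_i| ≤ |μ_i| for all 1 ≤ i ≤ n is also an eigenvalue for the adjoint tuple. -/

import Mathlib

noncomputable section

instance {n : ℕ} : DecidableEq (FreeMonoid (Fin n)) := Classical.decEq _

/-- `n`-variable Fock space `H_n = ℓ²(F_n^+)`. -/
abbrev Hn (n : ℕ) : Type := lp (fun _ : FreeMonoid (Fin n) => ℂ) 2

/-- The standard orthonormal basis vector `ξ_w` of `H_n`. -/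
def xi {n : ℕ} (w : FreeMonoid (Fin n)) : Hn n := lp.single 2 w 1

/-- Coefficient function of the eigenvector for eigenvalue tuple `l` with base value `a`. -/
def coeff {n : ℕ} (lam : Fin n → FreeMonoid (Fin n) → ℝ) (l : Fin n → ℂ) (a : ℂ)
    (w : FreeMonoid (Fin n)) : ℂ :=
  FreeMonoid.recOn w a fun i w cw => (starRingEnd ℂ) (l i) / (lam i w : ℂ) * cw

lemma coeff_one {n : ℕ} (lam : Fin n → FreeMonoid (Fin n) → ℝ) (l : Fin n → ℂ) (a : ℂ) :
    coeff lam l a 1 = a := rfl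

lemma coeff_cons {n : ℕ} (lam : Fin n → FreeMonoid (Fin n) → ℝ) (l : Fin n → ℂ) (a : ℂ)
    (i : Fin n) (w : FreeMonoid (Fin n)) :
    coeff lam l a (FreeMonoid.of i * w) = (starRingEnd ℂ) (l i) / (lam i w : ℂ) * coeff lam l a w :=
  rfl

lemma coeff_zero {n : ℕ} (lam : Fin n → FreeMonoid (Fin n) → ℝ) (l : Fin n → ℂ)
    (w : FreeMonoid (Fin n)) : coeff lam l 0 w = 0 := by
  induction w using FreeMonoid.recOn with
  | one => rfl
  | of_mul i w ih => rw [coeff_cons, ih, mul_zero]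

lemma coeff_norm_le {n : ℕ} (lam : Fin n → FreeMonoid (Fin n) → ℝ)
    (hpos : ∀ i w, 0 < lam i w) (l m : Fin n → ℂ) (hl : ∀ i, ‖l i‖ ≤ ‖m i‖) (a : ℂ)
    (w : FreeMonoid (Fin n)) : ‖coeff lam l a w‖ ≤ ‖coeff lam m a w‖ := by
  induction w using FreeMonoid.recOn with
  | one => exact le_rfl
  | of_mul i w ih =>
      rw [coeff_cons, coeff_cons, norm_mul, norm_mul, norm_div, norm_div]
      gcongr
      simpa using hl i

/-- Evaluation of a vector's coefficient via inner product with a basis vector. -/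
lemma inner_xi {n : ℕ} (f : Hn n) (w : FreeMonoid (Fin n)) : (inner ℂ (xi w) f : ℂ) = f w := by
  rw [xi, lp.inner_single_left]
  simp [RCLike.inner_apply]

/-- The eigenvalue set for the adjoint tuple is hereditary: if `μ` is an
eigenvalue for the adjoint tuple, then so is every `λ` with `|λ_i| ≤ |μ_i|` for all `i`. -/
theorem eigenvalues_hereditary (n : ℕ) (hn : 2 ≤ n)
    (lam : Fin n → FreeMonoid (Fin n) → ℝ)
    (hpos : ∀ i w, 0 < lam i w) (hbdd : ∃ C : ℝ, ∀ i w, lam i w ≤ C)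
    (T : Fin n → (Hn n →L[ℂ] Hn n))
    (hT : ∀ i w, T i (xi w) = (lam i w : ℂ) • xi (FreeMonoid.of i * w))
    (m : Fin n → ℂ)
    (hm : ∃ ξ : Hn n, ξ ≠ 0 ∧
      ∀ i, ContinuousLinearMap.adjoint (T i) ξ = (starRingEnd ℂ) (m i) • ξ)
    (l : Fin n → ℂ) (hl : ∀ i, ‖l i‖ ≤ ‖m i‖) :
    ∃ ξ : Hn n, ξ ≠ 0 ∧
      ∀ i, ContinuousLinearMap.adjoint (T i) ξ = (starRingEnd ℂ) (l i) • ξ := by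
  obtain ⟨ξ, hξ, heig⟩ := hm
  -- the fundamental recurrence for the coefficients of ξ
  have hrel : ∀ (i : Fin n) (w : FreeMonoid (Fin n)),
      (lam i w : ℂ) * ξ (FreeMonoid.of i * w) = (starRingEnd ℂ) (m i) * ξ w := by
    intro i w
    have h1 : (inner ℂ (xi w) (ContinuousLinearMap.adjoint (T i) ξ) : ℂ)
        = (lam i w : ℂ) * ξ (FreeMonoid.of i * w) := by
      rw [ContinuousLinearMap.adjoint_inner_right, hT, inner_smul_left, inner_xi]
      simp
    have h2 : (inner ℂ (xi w) (ContinuousLinearMap.adjoint (T i) ξ) : ℂ)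
        = (starRingEnd ℂ) (m i) * ξ w := by
      rw [heig, inner_smul_right, inner_xi]
    rw [← h1, h2]
  -- the coefficients of ξ are given by `coeff`
  have hxi_eq : ∀ w, ξ w = coeff lam m (ξ 1) w := by
    intro w
    induction w using FreeMonoid.recOn with
    | one => rfl
    | of_mul i w ih =>
        have hne : (lam i w : ℂ) ≠ 0 := by
          exact_mod_cast (hpos i w).ne'
        rw [coeff_cons, ← ih]
        field_simp
        linear_combination hrel i w
  -- the base coefficient is nonzero
  have hbase : ξ 1 ≠ 0 := by
    intro h0
    apply hξ
    apply lp.ext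
    funext w
    rw [lp.coeFn_zero, Pi.zero_apply, hxi_eq w, h0, coeff_zero]
  -- the new coefficient function is ℓ²
  have hmem : Memℓp (fun w => coeff lam l (ξ 1) w) 2 := by
    apply memℓp_gen
    have hsum : Summable fun w => ‖ξ w‖ ^ ENNReal.toReal 2 :=
      (lp.memℓp ξ).summable (by rw [ENNReal.toReal_ofNat]; norm_num)
    apply hsum.of_nonneg_of_le
    · intro w
      positivity
    · intro w
      have h1 : ‖coeff lam l (ξ 1) w‖ ≤ ‖ξ w‖ := by
        rw [hxi_eq w]
        exact coeff_norm_le lam hpos l m hl _ w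
      exact Real.rpow_le_rpow (norm_nonneg _) h1 ENNReal.toReal_nonneg
  -- the new eigenvector
  refine ⟨⟨fun w => coeff lam l (ξ 1) w, hmem⟩, ?_, ?_⟩
  · intro h0
    apply hbase
    have := congrArg (fun g : Hn n => (g : ∀ _ : FreeMonoid (Fin n), ℂ) 1) h0
    simpa [coeff_one] using this
  · intro i
    apply lp.ext
    funext w
    set η : Hn n := ⟨fun w => coeff lam l (ξ 1) w, hmem⟩ with hη
    have hηapp : ∀ v, η v = coeff lam l (ξ 1) v := fun v => rfl
    have h1 : (inner ℂ (xi w) (ContinuousLinearMap.adjoint (T i) η) : ℂ)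
        = (lam i w : ℂ) * η (FreeMonoid.of i * w) := by
      rw [ContinuousLinearMap.adjoint_inner_right, hT, inner_smul_left, inner_xi]
      simp
    have hne : (lam i w : ℂ) ≠ 0 := by exact_mod_cast (hpos i w).ne'
    have h2 : (lam i w : ℂ) * η (FreeMonoid.of i * w) = (starRingEnd ℂ) (l i) * η w := by
      rw [hηapp, hηapp, coeff_cons]
      field_simp
    have h3 : (ContinuousLinearMap.adjoint (T i) η) w
        = (starRingEnd ℂ) (l i) * η w := by
      rw [← inner_xi (ContinuousLinearMap.adjoint (T i) η) w, h1, h2]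
    rw [h3, lp.coeFn_smul, Pi.smul_apply, smul_eq_mul]
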